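/- Let Q ≥ 2 be an integer and Y = X + Z a real number where X = Σ_{i=0}^{N−1} X_i Q^i with digits X_i ∈ {1, …, Q−2}, and |Z| ≤ Q^{i₀−1} for some index i₀ with 1 ≤ i₀ ≤ N. Then for every j with i₀ ≤ j ≤ N−1, the j-th Q-ary digit of ⌊|Y|⌋ equals X_j. -/

import Mathlib

open Finset

-- L1: sum over Ico a b of digits (≤ Q-2) times Q^i, plus Q^a, is ≤ Q^b
private lemma sum_Ico_bound (Q : ℕ) (hQ : 2 ≤ Q) (Xd : ℕ → ℕ)
    (hXd : ∀ i, 1 ≤ Xd i ∧ Xd i ≤ Q - 2) (a b : ℕ) (hab : a ≤ b) :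
    (∑ i ∈ Finset.Ico a b, Xd i * Q ^ i) + Q ^ a ≤ Q ^ b := by
  induction b, hab using Nat.le_induction with
  | base => simp
  | succ b hb ih =>
    rw [Finset.sum_Ico_succ_top hb]
    have h1 : Xd b * Q ^ b ≤ (Q - 2) * Q ^ b :=
      Nat.mul_le_mul_right _ (hXd b).2
    have h2 : (Q - 2) * Q ^ b + Q ^ b ≤ (Q - 1) * Q ^ b := by
      have : (Q - 2) + 1 ≤ Q - 1 := by omega
      calc (Q - 2) * Q ^ b + Q ^ b = ((Q - 2) + 1) * Q ^ b := by ring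
        _ ≤ (Q - 1) * Q ^ b := Nat.mul_le_mul_right _ this
    have h3 : Q ^ b + (Q - 1) * Q ^ b ≤ Q ^ (b + 1) := by
      have : Q ^ b + (Q - 1) * Q ^ b = (1 + (Q - 1)) * Q ^ b := by ring
      rw [this, pow_succ]
      have : 1 + (Q - 1) = Q := by omega
      rw [this, mul_comm]
    calc (∑ i ∈ Finset.Ico a b, Xd i * Q ^ i) + Xd b * Q ^ b + Q ^ a
        = ((∑ i ∈ Finset.Ico a b, Xd i * Q ^ i) + Q ^ a) + Xd b * Q ^ b := by ring
      _ ≤ Q ^ b + ((Q - 2) * Q ^ b + Q ^ b) := by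
          have := h1; omega
      _ ≤ Q ^ b + (Q - 1) * Q ^ b := by omega
      _ ≤ Q ^ (b + 1) := h3

-- L2: low part bound with room for noise
private lemma low_bound (Q : ℕ) (hQ : 2 ≤ Q) (Xd : ℕ → ℕ)
    (hXd : ∀ i, 1 ≤ Xd i ∧ Xd i ≤ Q - 2) (k : ℕ) (hk : 1 ≤ k) :
    (∑ i ∈ Finset.range k, Xd i * Q ^ i) + Q ^ (k - 1) + 1 ≤ Q ^ k := by
  induction k, hk using Nat.le_induction with
  | base =>
    simp only [Finset.range_one, Finset.sum_singleton, pow_zero, pow_one, mul_one]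
    have h1 := (hXd 0).2
    have h2 : Q ^ (1 - 1) = 1 := by norm_num
    omega
  | succ k hk ih =>
    rw [Finset.sum_range_succ]
    have h1 : Xd k * Q ^ k ≤ (Q - 2) * Q ^ k := Nat.mul_le_mul_right _ (hXd k).2
    have h2 : (Q - 2) * Q ^ k + 2 * Q ^ k = Q * Q ^ k := by
      have : (Q - 2) + 2 = Q := by omega
      calc (Q - 2) * Q ^ k + 2 * Q ^ k = ((Q - 2) + 2) * Q ^ k := by ring
        _ = Q * Q ^ k := by rw [this]
    have h3 : Q ^ (k - 1) ≥ 1 := Nat.one_le_pow _ _ (by omega)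
    have h4 : Q ^ (k + 1 - 1) = Q ^ k := by simp
    rw [h4]
    have hpow : Q ^ (k + 1) = Q * Q ^ k := by rw [pow_succ, mul_comm]
    rw [hpow]
    omega

theorem digit_noise_robustness (Q N : ℕ) (hQ : 2 ≤ Q) (hN : 1 ≤ N)
    (Xd : ℕ → ℕ) (hXd : ∀ i, 1 ≤ Xd i ∧ Xd i ≤ Q - 2)
    (X : ℝ) (hX : X = ∑ i ∈ Finset.range N, (Xd i : ℝ) * (Q : ℝ) ^ i)
    (i₀ : ℕ) (hi₀ : 1 ≤ i₀) (hi₀N : i₀ ≤ N)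
    (Z Y : ℝ) (hZ : |Z| ≤ (Q : ℝ) ^ (i₀ - 1)) (hY : Y = X + Z) :
    ∀ j : ℕ, i₀ ≤ j → j ≤ N - 1 → (⌊|Y|⌋ / (Q : ℤ) ^ j) % Q = Xd j := by
  intro j hj hjN
  have hjN' : j < N := by omega
  have hQ0 : 0 < Q := by omega
  -- low and high parts (as naturals)
  set L : ℕ := ∑ i ∈ Finset.range i₀, Xd i * Q ^ i with hL
  set A : ℕ := ∑ i ∈ Finset.Ico i₀ N, Xd i * Q ^ i with hA
  -- X = L + A as reals
  have hsplit : X = (L : ℝ) + (A : ℝ) := by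
    rw [hX, hL, hA]
    push_cast
    rw [Finset.range_eq_Ico, ← Finset.sum_Ico_consecutive _ (Nat.zero_le i₀) hi₀N, ← Finset.range_eq_Ico]
  -- bounds on L
  have hL_lb : (Q : ℕ) ^ (i₀ - 1) ≤ L := by
    have hmem : i₀ - 1 ∈ Finset.range i₀ := by
      simp [Finset.mem_range]; omega
    calc Q ^ (i₀ - 1) = 1 * Q ^ (i₀ - 1) := (one_mul _).symm
      _ ≤ Xd (i₀ - 1) * Q ^ (i₀ - 1) := Nat.mul_le_mul_right _ (hXd _).1
      _ ≤ L := Finset.single_le_sum (f := fun i => Xd i * Q ^ i)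
          (fun i _ => Nat.zero_le _) hmem
  have hL_ub : L + Q ^ (i₀ - 1) + 1 ≤ Q ^ i₀ := low_bound Q hQ Xd hXd i₀ hi₀
  -- W := L + Z,  0 ≤ W,  floor W =: r with 0 ≤ r ≤ Q^i₀ - 1
  set W : ℝ := (L : ℝ) + Z with hW
  have hZ1 : -(Q : ℝ) ^ (i₀ - 1) ≤ Z := by
    have := abs_le.mp hZ; linarith [this.1]
  have hZ2 : Z ≤ (Q : ℝ) ^ (i₀ - 1) := (abs_le.mp hZ).2
  have hW0 : 0 ≤ W := by
    have : ((Q : ℝ) ^ (i₀ - 1)) ≤ (L : ℝ) := by exact_mod_cast hL_lb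
    rw [hW]; linarith
  have hWub : W ≤ ((Q ^ i₀ : ℕ) : ℝ) - 1 := by
    have h1 : (L : ℝ) + (Q : ℝ) ^ (i₀ - 1) + 1 ≤ ((Q ^ i₀ : ℕ) : ℝ) := by
      exact_mod_cast hL_ub
    rw [hW]; linarith
  set r : ℤ := ⌊W⌋ with hr
  have hr0 : 0 ≤ r := Int.le_floor.mpr (by exact_mod_cast hW0)
  have hrub : r ≤ (Q ^ i₀ : ℕ) - 1 := by
    have h := Int.floor_le_floor hWub
    rwa [show ((Q ^ i₀ : ℕ) : ℝ) - 1 = ((((Q ^ i₀ : ℕ) : ℤ) - 1 : ℤ) : ℝ) by push_cast; ring,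
      Int.floor_intCast] at h
  -- Y = A + W ≥ 0, and ⌊|Y|⌋ = A + r
  have hYeq : Y = W + (A : ℝ) := by rw [hY, hsplit, hW]; ring
  have hY0 : 0 ≤ Y := by
    rw [hYeq]; positivity
  have hfloor : ⌊|Y|⌋ = (A : ℤ) + r := by
    rw [abs_of_nonneg hY0, hYeq]
    rw [show ((A : ℝ)) = ((A : ℤ) : ℝ) by push_cast; ring]
    rw [Int.floor_add_intCast]
    ring
  -- switch to naturals
  set rn : ℕ := r.toNat with hrn
  have hrval : r = (rn : ℤ) := (Int.toNat_of_nonneg hr0).symm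
  have hrn_lt : rn < Q ^ i₀ := by
    have hq : (1 : ℤ) ≤ (Q ^ i₀ : ℕ) := by
      exact_mod_cast Nat.one_le_pow _ _ hQ0
    omega
  rw [hfloor, hrval]
  have hcast : (A : ℤ) + (rn : ℤ) = ((A + rn : ℕ) : ℤ) := by push_cast; ring
  rw [hcast, show ((Q : ℤ) ^ j) = ((Q ^ j : ℕ) : ℤ) by push_cast; ring,
    ← Int.natCast_div, ← Int.natCast_mod]
  norm_cast
  -- now a pure ℕ statement: (A + rn) / Q^j % Q = Xd j
  -- split A
  have hA1 : A = (∑ i ∈ Finset.Ico i₀ j, Xd i * Q ^ i)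
      + (∑ i ∈ Finset.Ico j N, Xd i * Q ^ i) := by
    rw [hA, ← Finset.sum_Ico_consecutive _ hj (le_of_lt hjN')]
  have hA2 : (∑ i ∈ Finset.Ico j N, Xd i * Q ^ i)
      = Xd j * Q ^ j + ∑ i ∈ Finset.Ico (j+1) N, Xd i * Q ^ i :=
    Finset.sum_eq_sum_Ico_succ_bot hjN' _
  set T : ℕ := ∑ i ∈ Finset.Ico (j+1) N, Xd i * Q ^ (i - (j+1)) with hT
  have hA3 : (∑ i ∈ Finset.Ico (j+1) N, Xd i * Q ^ i) = Q ^ (j+1) * T := by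
    rw [hT, Finset.mul_sum]
    apply Finset.sum_congr rfl
    intro i hi
    have hij : j + 1 ≤ i := (Finset.mem_Ico.mp hi).1
    have : Q ^ i = Q ^ (j+1) * Q ^ (i - (j+1)) := by
      rw [← pow_add]; congr 1; omega
    rw [this]; ring
  set C : ℕ := ∑ i ∈ Finset.Ico i₀ j, Xd i * Q ^ i with hC
  have hC_ub : C + Q ^ i₀ ≤ Q ^ j := sum_Ico_bound Q hQ Xd hXd i₀ j hj
  have hkey : A + rn = (C + rn) + Q ^ j * (Xd j + Q * T) := by
    rw [hA1, hA2, hA3, pow_succ]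
    ring
  rw [hkey]
  have hCr : C + rn < Q ^ j := by omega
  have hQj : 0 < Q ^ j := Nat.pow_pos hQ0
  rw [Nat.add_mul_div_left _ _ hQj, Nat.div_eq_of_lt hCr, Nat.zero_add,
    Nat.add_mul_mod_self_left, Nat.mod_eq_of_lt (by have := (hXd j).2; omega)]
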